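/- Let D be an integer that is not the square of any integer. Then the set of primes p with p ≡ 3 (mod 4), p ∤ D, and Legendre symbol (D/p) = -1 is infinite. In particular, for every prime a with a ≡ 1 (mod 4), there exist infinitely many primes b with b ≡ 3 (mod 4) and Legendre symbol (a/b) = -1. -/

import Mathlib

lemma coprime_of_modeq_one {K m : ℕ} (hm : m ≠ 0) (h : m ≡ 1 [MOD K]) : Nat.Coprime m K := by
  have h1 : 1 ≤ m := Nat.one_le_iff_ne_zero.mpr hm
  have hd : K ∣ m - 1 := (Nat.modEq_iff_dvd' h1).mp h.symm
  have : Nat.gcd m K ∣ 1 := by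
    have g1 : Nat.gcd m K ∣ m := Nat.gcd_dvd_left _ _
    have g2 : Nat.gcd m K ∣ m - 1 := (Nat.gcd_dvd_right _ _).trans hd
    simpa [Nat.sub_sub_self h1] using Nat.dvd_sub g1 g2
  exact Nat.eq_one_of_dvd_one this

/-- For any nonzero `T` and odd `r`, there is a nonzero `m ≡ r (mod 8)` coprime to `T`. -/
lemma exists_crt_coprime (T : ℕ) (hT0 : T ≠ 0) (r : ℕ) (hr : r % 2 = 1) :
    ∃ m : ℕ, m ≠ 0 ∧ Odd m ∧ m % 8 = r % 8 ∧ Nat.Coprime m T := by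
  obtain ⟨K, hKdef⟩ : ∃ x, x = T / 2 ^ T.factorization 2 := ⟨_, rfl⟩
  have hK : 2 ^ T.factorization 2 * K = T := by
    rw [hKdef]; exact Nat.ordProj_mul_ordCompl_eq_self T 2
  have hK2 : ¬ 2 ∣ K := by rw [hKdef]; exact Nat.not_dvd_ordCompl Nat.prime_two hT0
  have co8K : Nat.Coprime 8 K :=
    (show Nat.Coprime (2 ^ 3) K from ((Nat.prime_two.coprime_iff_not_dvd).mpr hK2).pow_left _)
  obtain ⟨m, hm8, hmK⟩ := Nat.chineseRemainder co8K r 1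
  have hm8' : m % 8 = r % 8 := hm8
  have hm2 : m % 2 = 1 := by omega
  have hm0 : m ≠ 0 := by omega
  refine ⟨m, hm0, Nat.odd_iff.mpr hm2, hm8', ?_⟩
  rw [← hK]
  refine Nat.Coprime.mul_right ?_ (coprime_of_modeq_one hm0 hmK)
  exact (Nat.coprime_comm.mp ((Nat.prime_two.coprime_iff_not_dvd).mpr (by omega))).pow_right _

/-- core: for a nonsquare `D` there is an odd `m` with `J(D|m) = -1`. -/
lemma exists_odd_jacobi_neg (D : ℤ) (hD : ¬ ∃ k : ℤ, k ^ 2 = D) :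
    ∃ m : ℕ, Odd m ∧ jacobiSym D m = -1 := by
  have hD0 : D ≠ 0 := by rintro rfl; exact hD ⟨0, by ring⟩
  obtain ⟨T, hTdef⟩ : ∃ x, x = D.natAbs := ⟨_, rfl⟩
  have hT0 : T ≠ 0 := hTdef ▸ Int.natAbs_ne_zero.mpr hD0
  have hDT : D = (T : ℤ) ∨ D = -(T : ℤ) := hTdef ▸ Int.natAbs_eq D
  obtain ⟨A, b, hab, hsf⟩ := Nat.sq_mul_squarefree T
  have hA0 : A ≠ 0 := hsf.ne_zero
  have hb0 : b ≠ 0 := by rintro rfl; simp at hab; omega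
  obtain ⟨v, hvdef⟩ : ∃ x, x = A.factorization 2 := ⟨_, rfl⟩
  obtain ⟨u, hudef⟩ : ∃ x, x = A / 2 ^ v := ⟨_, rfl⟩
  have hAu : 2 ^ v * u = A := by
    rw [hudef, hvdef]; exact Nat.ordProj_mul_ordCompl_eq_self A 2
  have hu2 : ¬ 2 ∣ u := by
    rw [hudef, hvdef]; exact Nat.not_dvd_ordCompl Nat.prime_two hA0
  have hu0 : u ≠ 0 := fun h => hA0 (by rw [← hAu, h, mul_zero])
  have huodd : Odd u := Nat.odd_iff.mpr (by
    rcases Nat.mod_two_eq_zero_or_one u with h | h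
    · exact absurd (Nat.dvd_of_mod_eq_zero h) hu2
    · exact h)
  have hbT : b ∣ T := ⟨b * A, by rw [← hab]; ring⟩
  rcases eq_or_ne u 1 with hu1 | hu1
  · -- u = 1 : A = 2^v with v ≤ 1
    have hA2 : A = 2 ^ v := by rw [← hAu, hu1, mul_one]
    have hv1 : v ≤ 1 := by
      by_contra h
      have h4 : 2 * 2 ∣ A := by
        have h1 : (2:ℕ) ^ 2 ∣ 2 ^ v := pow_dvd_pow 2 (by omega)
        rw [hA2]; exact (by norm_num : (2 * 2 : ℕ) = 2 ^ 2) ▸ h1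
      have := hsf 2 h4
      simp [Nat.isUnit_iff] at this
    rcases hDT with hDT | hDT
    · -- D = T > 0
      interval_cases v
      · exact absurd ⟨(b : ℤ), by rw [hDT, ← hab, hA2]; push_cast; ring⟩ hD
      · -- D = 2 * b^2, take r = 3
        obtain ⟨m, hm0, hmodd, hm8, hmcop⟩ := exists_crt_coprime T hT0 3 (by norm_num)
        refine ⟨m, hmodd, ?_⟩
        have hTe : (T : ℤ) = (b : ℤ) ^ 2 * 2 := by rw [← hab, hA2]; push_cast; ring
        have hJb : jacobiSym ((b : ℤ) ^ 2) m = 1 := by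
          apply jacobiSym.sq_one'
          have : Nat.Coprime b m := (Nat.Coprime.coprime_dvd_right hbT hmcop).symm
          simpa [Int.gcd_natCast_natCast] using this
        have hJ2 : jacobiSym 2 m = -1 := by
          rw [jacobiSym.at_two hmodd, ZMod.χ₈_nat_eq_if_mod_eight]
          have h2 : m % 2 = 1 := Nat.odd_iff.mp hmodd
          have : ¬ (m % 8 = 1 ∨ m % 8 = 7) := by omega
          simp [h2, this]
        rw [hDT, hTe, jacobiSym.mul_left, hJb, hJ2]; norm_num
    · -- D = -T
      interval_cases v
      · -- D = -b^2, take r = 3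
        obtain ⟨m, hm0, hmodd, hm8, hmcop⟩ := exists_crt_coprime T hT0 3 (by norm_num)
        refine ⟨m, hmodd, ?_⟩
        have hTe : (T : ℤ) = (b : ℤ) ^ 2 := by rw [← hab, hA2]; push_cast; ring
        have hJb : jacobiSym ((b : ℤ) ^ 2) m = 1 := by
          apply jacobiSym.sq_one'
          have : Nat.Coprime b m := (Nat.Coprime.coprime_dvd_right hbT hmcop).symm
          simpa [Int.gcd_natCast_natCast] using this
        have hχ : ZMod.χ₄ (m : ZMod 4) = -1 := by
          have h2 : m % 2 = 1 := Nat.odd_iff.mp hmodd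
          have h4 : m % 4 = 3 := by omega
          rw [ZMod.χ₄_nat_eq_if_mod_four]; simp [h2, h4]
        rw [hDT, hTe, jacobiSym.neg _ hmodd, hχ, hJb]; norm_num
      · -- D = -2*b^2, take r = 5
        obtain ⟨m, hm0, hmodd, hm8, hmcop⟩ := exists_crt_coprime T hT0 5 (by norm_num)
        refine ⟨m, hmodd, ?_⟩
        have hTe : (T : ℤ) = (b : ℤ) ^ 2 * 2 := by rw [← hab, hA2]; push_cast; ring
        have hJb : jacobiSym ((b : ℤ) ^ 2) m = 1 := by
          apply jacobiSym.sq_one'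
          have : Nat.Coprime b m := (Nat.Coprime.coprime_dvd_right hbT hmcop).symm
          simpa [Int.gcd_natCast_natCast] using this
        have h2 : m % 2 = 1 := Nat.odd_iff.mp hmodd
        have hJ2 : jacobiSym 2 m = -1 := by
          rw [jacobiSym.at_two hmodd, ZMod.χ₈_nat_eq_if_mod_eight]
          have : ¬ (m % 8 = 1 ∨ m % 8 = 7) := by omega
          simp [h2, this]
        have hχ : ZMod.χ₄ (m : ZMod 4) = 1 := by
          have h4 : m % 4 = 1 := by omega
          rw [ZMod.χ₄_nat_eq_if_mod_four]; simp [h2, h4]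
        rw [hDT, hTe, jacobiSym.neg _ hmodd, jacobiSym.mul_left, hJb, hJ2, hχ]
        norm_num
  · -- u > 1 : take an odd prime q ∣ u
    obtain ⟨q, hqdef⟩ : ∃ x, x = u.minFac := ⟨_, rfl⟩
    have hq : q.Prime := hqdef ▸ Nat.minFac_prime hu1
    haveI : Fact q.Prime := ⟨hq⟩
    have hqu : q ∣ u := hqdef ▸ Nat.minFac_dvd u
    have hq2 : q ≠ 2 := fun h => hu2 (h ▸ hqu)
    have h2q : ¬ 2 ∣ q := fun h => hq2 ((Nat.prime_dvd_prime_iff_eq Nat.prime_two hq).mp h).symm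
    obtain ⟨w, hwdef⟩ : ∃ x, x = u / q := ⟨_, rfl⟩
    have hw : q * w = u := by rw [hwdef]; exact Nat.mul_div_cancel' hqu
    have hw0 : w ≠ 0 := fun h => hu0 (by rw [← hw, h, mul_zero])
    have hqw : ¬ q ∣ w := by
      intro hdvd
      obtain ⟨w', hw'⟩ := hdvd
      have : q * q ∣ A := ⟨w' * 2 ^ v, by rw [← hAu, ← hw, hw']; ring⟩
      have := hsf q this
      exact hq.one_lt.ne' (Nat.isUnit_iff.mp this)
    obtain ⟨T₂, hT2def⟩ : ∃ x, x = T / 2 ^ T.factorization 2 := ⟨_, rfl⟩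
    have hT2 : 2 ^ T.factorization 2 * T₂ = T := by
      rw [hT2def]; exact Nat.ordProj_mul_ordCompl_eq_self T 2
    have hT20 : T₂ ≠ 0 := fun h => hT0 (by rw [← hT2, h, mul_zero])
    have hT2odd : ¬ 2 ∣ T₂ := by rw [hT2def]; exact Nat.not_dvd_ordCompl Nat.prime_two hT0
    obtain ⟨K, hKdef⟩ : ∃ x, x = T₂ / q ^ T₂.factorization q := ⟨_, rfl⟩
    have hK : q ^ T₂.factorization q * K = T₂ := by
      rw [hKdef]; exact Nat.ordProj_mul_ordCompl_eq_self T₂ q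
    have hK0 : K ≠ 0 := fun h => hT20 (by rw [← hK, h, mul_zero])
    have hKq : Nat.Coprime q K := hKdef ▸ Nat.coprime_ordCompl hq hT20
    have hKdvd : K ∣ T₂ := ⟨q ^ T₂.factorization q, by rw [mul_comm] at hK; exact hK.symm⟩
    have hK2 : ¬ 2 ∣ K := fun h => hT2odd (h.trans hKdvd)
    have huT : u ∣ T := dvd_trans (show u ∣ A from ⟨2 ^ v, by rw [← hAu]; ring⟩) (show A ∣ T from ⟨b ^ 2, by rw [← hab]; ring⟩)
    have huT2 : u ∣ T₂ := by
      have hco : Nat.Coprime u (2 ^ T.factorization 2) :=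
        (Nat.coprime_comm.mp ((Nat.prime_two.coprime_iff_not_dvd).mpr hu2)).pow_right _
      exact hco.dvd_of_dvd_mul_left (by rw [hT2]; exact huT)
    have hwK : w ∣ K := by
      have hwT2 : w ∣ T₂ := dvd_trans (show w ∣ u from ⟨q, by rw [← hw]; ring⟩) huT2
      have hco : Nat.Coprime w (q ^ T₂.factorization q) :=
        (Nat.coprime_comm.mp ((hq.coprime_iff_not_dvd).mpr hqw)).pow_right _
      exact hco.dvd_of_dvd_mul_left (by rw [hK]; exact hwT2)
    -- a nonresidue mod q
    have hchar : ringChar (ZMod q) ≠ 2 := by rw [ZMod.ringChar_zmod_n]; exact hq2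
    obtain ⟨x, hx⟩ := FiniteField.exists_nonsquare hchar
    obtain ⟨c, hcdef⟩ : ∃ y, y = x.val := ⟨_, rfl⟩
    have hcx : ((c : ℕ) : ZMod q) = x := by
      rw [hcdef]; exact (ZMod.natCast_val x).trans (ZMod.cast_id _ _)
    have hqc : ¬ q ∣ c := by
      intro h
      apply hx
      have h0 : ((c : ℕ) : ZMod q) = 0 := (ZMod.natCast_eq_zero_iff c q).mpr h
      rw [← hcx, h0]
      exact ⟨0, (mul_zero 0).symm⟩
    have hlc : jacobiSym (c : ℤ) q = -1 := by
      rw [← jacobiSym.legendreSym.to_jacobiSym]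
      exact (legendreSym.eq_neg_one_iff q).mpr (by rwa [Int.cast_natCast, hcx])
    -- CRT
    have co8q : Nat.Coprime 8 q :=
      (show Nat.Coprime (2 ^ 3) q from ((Nat.prime_two.coprime_iff_not_dvd).mpr h2q).pow_left _)
    obtain ⟨m₁, hm₁8, hm₁q⟩ := Nat.chineseRemainder co8q 1 c
    have co8qK : Nat.Coprime (8 * q) K := Nat.Coprime.mul
      (show Nat.Coprime (2 ^ 3) K from ((Nat.prime_two.coprime_iff_not_dvd).mpr hK2).pow_left _)
      hKq
    obtain ⟨m, hm8q, hmK⟩ := Nat.chineseRemainder co8qK m₁ 1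
    have hm8 : m ≡ 1 [MOD 8] := (Nat.ModEq.of_dvd ⟨q, rfl⟩ hm8q).trans hm₁8
    have hmq : m ≡ c [MOD q] := (Nat.ModEq.of_dvd ⟨8, by ring⟩ hm8q).trans hm₁q
    have hmw : m ≡ 1 [MOD w] := Nat.ModEq.of_dvd hwK hmK
    have hm8' : m % 8 = 1 := hm8
    have hm2 : m % 2 = 1 := by omega
    have hm0 : m ≠ 0 := by omega
    have hm4 : m % 4 = 1 := by omega
    have hmodd : Odd m := Nat.odd_iff.mpr hm2
    have hqm : ¬ q ∣ m := by
      intro h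
      apply hqc
      have h0 : m % q = 0 := Nat.mod_eq_zero_of_dvd h
      have : c % q = 0 := by rw [← hmq]; exact h0
      exact Nat.dvd_of_mod_eq_zero this
    have hcopT : Nat.Coprime m T := by
      rw [← hT2, ← hK]
      refine Nat.Coprime.mul_right ?_ (Nat.Coprime.mul_right ?_ (coprime_of_modeq_one hm0 hmK))
      · exact (Nat.coprime_comm.mp ((Nat.prime_two.coprime_iff_not_dvd).mpr
          (fun h => by omega))).pow_right _
      · exact (Nat.coprime_comm.mp ((hq.coprime_iff_not_dvd).mpr hqm)).pow_right _
    refine ⟨m, hmodd, ?_⟩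
    have hTe : (T : ℤ) = (b : ℤ) ^ 2 * ((2 : ℤ) ^ v * (u : ℤ)) := by
      rw [← hab, ← hAu]; push_cast; ring
    have hJb : jacobiSym ((b : ℤ) ^ 2) m = 1 := by
      apply jacobiSym.sq_one'
      have : Nat.Coprime b m := (Nat.Coprime.coprime_dvd_right hbT hcopT).symm
      simpa [Int.gcd_natCast_natCast] using this
    have hJ2 : jacobiSym 2 m = 1 := by
      rw [jacobiSym.at_two hmodd, ZMod.χ₈_nat_eq_if_mod_eight]
      simp [hm2, hm8']
    have hJu : jacobiSym (u : ℤ) m = -1 := by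
      rw [jacobiSym.quadratic_reciprocity_one_mod_four' huodd hm4, ← hw,
        jacobiSym.mul_right' (m : ℤ) hq.pos.ne' hw0]
      have h1 : jacobiSym (m : ℤ) q = -1 := by
        have hcast : (m : ℤ) % (q : ℤ) = (c : ℤ) % (q : ℤ) := by
          rw [← Int.natCast_mod, ← Int.natCast_mod, hmq]
        rw [jacobiSym.mod_left' hcast, hlc]
      have h2 : jacobiSym (m : ℤ) w = 1 := by
        have hcast : (m : ℤ) % (w : ℤ) = (1 : ℤ) % (w : ℤ) := by
          rw [← Int.natCast_mod, show ((1:ℤ) % (w:ℤ)) = ((1 % w : ℕ) : ℤ) from (Int.natCast_mod 1 w).symm, hmw]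
        rw [jacobiSym.mod_left' hcast, jacobiSym.one_left]
      rw [h1, h2]; norm_num
    have hJT : jacobiSym (T : ℤ) m = -1 := by
      rw [hTe, jacobiSym.mul_left, hJb, jacobiSym.mul_left, jacobiSym.pow_left, hJ2, hJu]
      norm_num
    rcases hDT with hDT | hDT
    · rw [hDT, hJT]
    · have hχ : ZMod.χ₄ (m : ZMod 4) = 1 := by
        rw [ZMod.χ₄_nat_eq_if_mod_four]; simp [hm2, hm4]
      rw [hDT, jacobiSym.neg _ hmodd, hχ, hJT]; norm_num

lemma exists_three_mod_four_jacobi_neg (D : ℤ) (hD : ¬ ∃ k : ℤ, k ^ 2 = D) :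
    ∃ n : ℕ, n % 4 = 3 ∧ jacobiSym D n = -1 := by
  have hD0 : D ≠ 0 := by rintro rfl; exact hD ⟨0, by ring⟩
  obtain ⟨m, hmodd, hm⟩ := exists_odd_jacobi_neg D hD
  have hm2 : m % 2 = 1 := Nat.odd_iff.mp hmodd
  obtain ⟨n₀, hn0, hnodd, hn8, hncop⟩ :=
    exists_crt_coprime D.natAbs (Int.natAbs_ne_zero.mpr hD0) 3 (by norm_num)
  have hn2 : n₀ % 2 = 1 := Nat.odd_iff.mp hnodd
  have hn4 : n₀ % 4 = 3 := by omega
  have hgcd : Int.gcd D (n₀ : ℤ) = 1 := by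
    rw [Int.gcd]; simpa using hncop.symm
  rcases jacobiSym.eq_one_or_neg_one hgcd with h1 | h1
  · rcases (show m % 4 = 1 ∨ m % 4 = 3 by omega) with hm4 | hm4
    · refine ⟨m * n₀, ?_, ?_⟩
      · rw [Nat.mul_mod, hm4, hn4]
      · rw [jacobiSym.mul_right' D (by omega) hn0, hm, h1]; norm_num
    · exact ⟨m, hm4, hm⟩
  · exact ⟨n₀, hn4, h1⟩

lemma rogers_part1 (D : ℤ) (hD : ¬ ∃ k : ℤ, k ^ 2 = D) :
    {p : ℕ | ∃ hp : p.Prime, p % 4 = 3 ∧ ¬((p : ℤ) ∣ D) ∧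
      @legendreSym p ⟨hp⟩ D = -1}.Infinite := by
  have hD0 : D ≠ 0 := by rintro rfl; exact hD ⟨0, by ring⟩
  obtain ⟨n, hn4, hJ⟩ := exists_three_mod_four_jacobi_neg D hD
  have hn0 : n ≠ 0 := by omega
  have hn2 : n % 2 = 1 := by omega
  have hnodd : Odd n := Nat.odd_iff.mpr hn2
  set N := 4 * D.natAbs with hNdef
  have hN0 : N ≠ 0 := by
    have := Int.natAbs_ne_zero.mpr hD0; omega
  haveI : NeZero N := ⟨hN0⟩
  have hgcd : Int.gcd D (n : ℤ) = 1 := by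
    by_contra h
    have : jacobiSym D n = 0 := jacobiSym.eq_zero_iff.mpr ⟨hn0, h⟩
    rw [hJ] at this; norm_num at this
  have hcopD : Nat.Coprime n D.natAbs := by
    have : Nat.gcd D.natAbs n = 1 := by simpa [Int.gcd] using hgcd
    exact Nat.Coprime.symm this
  have hcop4 : Nat.Coprime n 4 :=
    (show Nat.Coprime n (2 ^ 2) from
      ((Nat.coprime_comm.mp ((Nat.prime_two.coprime_iff_not_dvd).mpr (by omega)))).pow_right _)
  have hunit : IsUnit ((n : ZMod N)) :=
    (ZMod.isUnit_iff_coprime n N).mpr (Nat.Coprime.mul_right hcop4 hcopD)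
  refine Set.Infinite.mono ?_ (Nat.infinite_setOfPred_prime_and_eq_mod hunit)
  rintro p ⟨hp, hpe⟩
  have hmod : p ≡ n [MOD N] := (ZMod.natCast_eq_natCast_iff _ _ _).mp hpe
  have hmod4 : p % 4 = n % 4 := Nat.ModEq.of_dvd ⟨D.natAbs, rfl⟩ hmod
  have hp4 : p % 4 = 3 := by omega
  have hp2 : p % 2 = 1 := by omega
  have hpodd : Odd p := Nat.odd_iff.mpr hp2
  have hleg : jacobiSym D p = -1 := by
    rw [jacobiSym.mod_right D hpodd, show p % (4 * D.natAbs) = n % (4 * D.natAbs) from hmod,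
      ← jacobiSym.mod_right D hnodd, hJ]
  refine ⟨hp, hp4, ?_, ?_⟩
  · intro hdvd
    have h1 : p ∣ D.natAbs := Int.ofNat_dvd_right.mp (Int.dvd_natAbs.mpr hdvd)
    have hg : Int.gcd D (p : ℤ) ≠ 1 := by
      have h2 : p ∣ Int.gcd D (p : ℤ) := by
        rw [Int.gcd]; simpa using Nat.dvd_gcd h1 dvd_rfl
      intro h
      rw [h] at h2
      have := Nat.eq_one_of_dvd_one h2
      exact hp.one_lt.ne' this
    have h0 : jacobiSym D p = 0 := jacobiSym.eq_zero_iff.mpr ⟨hp.pos.ne', hg⟩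
    rw [hleg] at h0; norm_num at h0
  · rw [@jacobiSym.legendreSym.to_jacobiSym p ⟨hp⟩ D]
    exact hleg

/-- Strong form of Legendre's Lemma (Rogers): for a nonsquare integer `D`, the set
of primes `p ≡ 3 (mod 4)` with `p ∤ D` and `(D/p) = -1` is infinite. In particular,
for every prime `a ≡ 1 (mod 4)` there are infinitely many primes `b ≡ 3 (mod 4)`
with `(a/b) = -1`. -/
theorem rogers_legendre_lemma (D : ℤ) (hD : ¬ ∃ k : ℤ, k ^ 2 = D) :
    {p : ℕ | ∃ hp : p.Prime, p % 4 = 3 ∧ ¬((p : ℤ) ∣ D) ∧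
      @legendreSym p ⟨hp⟩ D = -1}.Infinite ∧
    ∀ a : ℕ, a.Prime → a % 4 = 1 →
      {b : ℕ | ∃ hb : b.Prime, b % 4 = 3 ∧
        @legendreSym b ⟨hb⟩ (a : ℤ) = -1}.Infinite := by
  refine ⟨rogers_part1 D hD, ?_⟩
  intro a ha _
  have hns : ¬ ∃ k : ℤ, k ^ 2 = (a : ℤ) := by
    rintro ⟨k, hk⟩
    have hpa : Prime (a : ℤ) := by rw [Int.prime_iff_natAbs_prime]; simpa using ha
    exact hpa.not_isSquare ⟨k, by rw [← hk]; ring⟩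
  refine Set.Infinite.mono ?_ (rogers_part1 (a : ℤ) hns)
  rintro p ⟨hp, hp4, _, hleg⟩
  exact ⟨hp, hp4, hleg⟩
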